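/- Under the randomization assumption, the null hypothesis that Y(x,z) and Y(x',z) are equal in distribution for all x, x', z is equivalent to the conditional independence Y ⊥ X | Z (Theorem 1 of the paper). -/
import Mathlib


open Finset

open Classical in
/-- Probability of an event `S` under the weight function `p` on a finite sample space. -/
noncomputable def Pr {Ω : Type*} [Fintype Ω] (p : Ω → ℝ) (S : Ω → Prop) : ℝ :=
  ∑ ω, if S ω then p ω else 0

open Classical

lemma Pr_congr {Ω : Type*} [Fintype Ω] (p : Ω → ℝ) {S T : Ω → Prop}
    (h : ∀ ω, S ω ↔ T ω) : Pr p S = Pr p T := by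
  unfold Pr; apply Finset.sum_congr rfl; intro ω _; simp [h ω]

lemma Pr_nonneg {Ω : Type*} [Fintype Ω] {p : Ω → ℝ} (hp : ∀ ω, 0 ≤ p ω) (S : Ω → Prop) :
    0 ≤ Pr p S := by
  unfold Pr; apply Finset.sum_nonneg; intro ω _
  split <;> simp [hp ω]

lemma Pr_mono {Ω : Type*} [Fintype Ω] {p : Ω → ℝ} (hp : ∀ ω, 0 ≤ p ω) {S T : Ω → Prop}
    (h : ∀ ω, S ω → T ω) : Pr p S ≤ Pr p T := by
  unfold Pr; apply Finset.sum_le_sum; intro ω _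
  by_cases hs : S ω
  · simp [hs, h ω hs]
  · simp only [hs, if_false]
    split <;> simp [hp ω]

lemma Pr_marginal {Ω 𝒳 : Type*} [Fintype Ω] [Fintype 𝒳] (p : Ω → ℝ) (X : Ω → 𝒳)
    (S : Ω → Prop) : Pr p S = ∑ x, Pr p (fun ω => S ω ∧ X ω = x) := by
  unfold Pr
  rw [Finset.sum_comm]
  apply Finset.sum_congr rfl; intro ω _
  by_cases hs : S ω
  · simp [hs, Finset.sum_ite_eq]
  · simp [hs]

lemma Pr_fiber_sum {Ω 𝒳 𝒵 : Type*} [Fintype Ω] [Fintype 𝒳] [Fintype 𝒵]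
    (p : Ω → ℝ) (Y0 : 𝒳 → 𝒵 → Ω → ℝ) (A : Ω → Prop) (x : 𝒳) (z : 𝒵) (t : ℝ) :
    ∑ g ∈ (Finset.univ.image (fun ω a b => Y0 a b ω)).filter (fun g => g x z = t),
        Pr p (fun ω => A ω ∧ ∀ a b, Y0 a b ω = g a b)
      = Pr p (fun ω => A ω ∧ Y0 x z ω = t) := by
  unfold Pr
  rw [Finset.sum_comm]
  apply Finset.sum_congr rfl; intro ω _
  by_cases hA : A ω
  · have hmem : (fun a b => Y0 a b ω) ∈ (Finset.univ.image (fun ω a b => Y0 a b ω)) :=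
      Finset.mem_image_of_mem _ (Finset.mem_univ ω)
    have key : ∀ g : 𝒳 → 𝒵 → ℝ,
        ((∀ a b, Y0 a b ω = g a b) ↔ (fun a b => Y0 a b ω) = g) := by
      intro g; constructor
      · intro h; funext a b; exact h a b
      · intro h a b; exact congrFun (congrFun h a) b
    simp only [hA, true_and, key]
    rw [Finset.sum_ite_eq _ _ (fun _ => p ω)]
    simp [Finset.mem_filter, hmem]
  · simp [hA]

lemma Pr_indep {Ω 𝒳 𝒵 : Type*} [Fintype Ω] [Fintype 𝒳] [Fintype 𝒵]
    (p : Ω → ℝ) (X : Ω → 𝒳) (Z : Ω → 𝒵) (Y0 : 𝒳 → 𝒵 → Ω → ℝ)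
    (hrand : ∀ (x : 𝒳) (z : 𝒵) (g : 𝒳 → 𝒵 → ℝ),
      Pr p (fun ω => X ω = x ∧ Z ω = z ∧ ∀ a b, Y0 a b ω = g a b)
        = Pr p (fun ω => X ω = x ∧ Z ω = z) * Pr p (fun ω => ∀ a b, Y0 a b ω = g a b))
    (x' : 𝒳) (z' : 𝒵) (x : 𝒳) (z : 𝒵) (t : ℝ) :
    Pr p (fun ω => X ω = x' ∧ Z ω = z' ∧ Y0 x z ω = t)
      = Pr p (fun ω => X ω = x' ∧ Z ω = z') * Pr p (fun ω => Y0 x z ω = t) := by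
  have h1 := Pr_fiber_sum p Y0 (fun ω => X ω = x' ∧ Z ω = z') x z t
  have h2 := Pr_fiber_sum p Y0 (fun _ => True) x z t
  calc Pr p (fun ω => X ω = x' ∧ Z ω = z' ∧ Y0 x z ω = t)
      = Pr p (fun ω => (X ω = x' ∧ Z ω = z') ∧ Y0 x z ω = t) := Pr_congr p (by tauto)
    _ = ∑ g ∈ (Finset.univ.image (fun ω a b => Y0 a b ω)).filter (fun g => g x z = t),
          Pr p (fun ω => (X ω = x' ∧ Z ω = z') ∧ ∀ a b, Y0 a b ω = g a b) := h1.symm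
    _ = ∑ g ∈ (Finset.univ.image (fun ω a b => Y0 a b ω)).filter (fun g => g x z = t),
          Pr p (fun ω => X ω = x' ∧ Z ω = z') * Pr p (fun ω => ∀ a b, Y0 a b ω = g a b) := by
        apply Finset.sum_congr rfl; intro g _
        rw [← hrand x' z' g]; exact Pr_congr p (by tauto)
    _ = Pr p (fun ω => X ω = x' ∧ Z ω = z') *
          ∑ g ∈ (Finset.univ.image (fun ω a b => Y0 a b ω)).filter (fun g => g x z = t),
            Pr p (fun ω => ∀ a b, Y0 a b ω = g a b) := by rw [Finset.mul_sum]
    _ = Pr p (fun ω => X ω = x' ∧ Z ω = z') * Pr p (fun ω => Y0 x z ω = t) := by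
        congr 1
        calc ∑ g ∈ (Finset.univ.image (fun ω a b => Y0 a b ω)).filter (fun g => g x z = t),
              Pr p (fun ω => ∀ a b, Y0 a b ω = g a b)
            = ∑ g ∈ (Finset.univ.image (fun ω a b => Y0 a b ω)).filter (fun g => g x z = t),
              Pr p (fun ω => True ∧ ∀ a b, Y0 a b ω = g a b) := by
              apply Finset.sum_congr rfl; intro g _; exact Pr_congr p (by tauto)
          _ = Pr p (fun ω => True ∧ Y0 x z ω = t) := h2
          _ = Pr p (fun ω => Y0 x z ω = t) := Pr_congr p (by tauto)

theorem stmt2 {Ω 𝒳 𝒵 : Type*} [Fintype Ω] [Fintype 𝒳] [Fintype 𝒵]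
    (p : Ω → ℝ) (hp : ∀ ω, 0 ≤ p ω) (hp1 : ∑ ω, p ω = 1)
    (X : Ω → 𝒳) (Z : Ω → 𝒵) (Y0 : 𝒳 → 𝒵 → Ω → ℝ)
    (Y : Ω → ℝ) (hY : ∀ ω, Y ω = Y0 (X ω) (Z ω) ω)
    -- randomization: (X,Z) is independent of the family of potential outcomes
    (hrand : ∀ (x : 𝒳) (z : 𝒵) (g : 𝒳 → 𝒵 → ℝ),
      Pr p (fun ω => X ω = x ∧ Z ω = z ∧ ∀ a b, Y0 a b ω = g a b)
        = Pr p (fun ω => X ω = x ∧ Z ω = z) * Pr p (fun ω => ∀ a b, Y0 a b ω = g a b)) :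
    -- H₀ (equality in distribution of potential outcomes) ↔ Y ⊥ X | Z
    ((∀ (x x' : 𝒳) (z : 𝒵),
        0 < Pr p (fun ω => X ω = x ∧ Z ω = z) →
        0 < Pr p (fun ω => X ω = x' ∧ Z ω = z) →
        ∀ t : ℝ, Pr p (fun ω => Y0 x z ω = t) = Pr p (fun ω => Y0 x' z ω = t))
      ↔ (∀ (t : ℝ) (x : 𝒳) (z : 𝒵), 0 < Pr p (fun ω => Z ω = z) →
          Pr p (fun ω => Y ω = t ∧ X ω = x ∧ Z ω = z) / Pr p (fun ω => Z ω = z)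
            = (Pr p (fun ω => Y ω = t ∧ Z ω = z) / Pr p (fun ω => Z ω = z))
              * (Pr p (fun ω => X ω = x ∧ Z ω = z) / Pr p (fun ω => Z ω = z)))) := by
  -- key identity: Pr(Y = t ∧ X = x ∧ Z = z) = Pr(Y0 x z = t) * Pr(X = x ∧ Z = z)
  have hPA : ∀ (x : 𝒳) (z : 𝒵) (t : ℝ),
      Pr p (fun ω => Y ω = t ∧ X ω = x ∧ Z ω = z)
        = Pr p (fun ω => Y0 x z ω = t) * Pr p (fun ω => X ω = x ∧ Z ω = z) := by
    intro x z t
    have : Pr p (fun ω => Y ω = t ∧ X ω = x ∧ Z ω = z)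
        = Pr p (fun ω => X ω = x ∧ Z ω = z ∧ Y0 x z ω = t) := by
      apply Pr_congr
      intro ω
      constructor
      · rintro ⟨hy, hx, hz⟩
        refine ⟨hx, hz, ?_⟩
        rw [← hy, hY ω, hx, hz]
      · rintro ⟨hx, hz, hy⟩
        refine ⟨?_, hx, hz⟩
        rw [hY ω, hx, hz, hy]
    rw [this, Pr_indep p X Z Y0 hrand x z x z t, mul_comm]
  constructor
  · -- H₀ → conditional independence
    intro hH0 t x z hz
    by_cases hx : 0 < Pr p (fun ω => X ω = x ∧ Z ω = z)
    · have hYZ : Pr p (fun ω => Y ω = t ∧ Z ω = z)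
          = Pr p (fun ω => Y0 x z ω = t) * Pr p (fun ω => Z ω = z) := by
        rw [Pr_marginal p X (fun ω => Y ω = t ∧ Z ω = z),
            Pr_marginal p X (fun ω => Z ω = z), Finset.mul_sum]
        apply Finset.sum_congr rfl; intro x' _
        have e1 : Pr p (fun ω => (Y ω = t ∧ Z ω = z) ∧ X ω = x')
            = Pr p (fun ω => Y ω = t ∧ X ω = x' ∧ Z ω = z) := Pr_congr p (by tauto)
        have e2 : Pr p (fun ω => Z ω = z ∧ X ω = x')
            = Pr p (fun ω => X ω = x' ∧ Z ω = z) := Pr_congr p (by tauto)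
        rw [e1, e2, hPA x' z t]
        by_cases hx' : 0 < Pr p (fun ω => X ω = x' ∧ Z ω = z)
        · rw [hH0 x' x z hx' hx t]
        · have h0 : Pr p (fun ω => X ω = x' ∧ Z ω = z) = 0 :=
            le_antisymm (not_lt.mp hx') (Pr_nonneg hp _)
          rw [h0, mul_zero, mul_zero]
      rw [hPA x z t, hYZ, mul_div_cancel_right₀ _ hz.ne', mul_div_assoc]
    · have hx0 : Pr p (fun ω => X ω = x ∧ Z ω = z) = 0 :=
        le_antisymm (not_lt.mp hx) (Pr_nonneg hp _)
      have hnum : Pr p (fun ω => Y ω = t ∧ X ω = x ∧ Z ω = z) = 0 := by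
        have h1 := Pr_mono hp (fun ω (h : Y ω = t ∧ X ω = x ∧ Z ω = z) => h.2)
        have h2 := Pr_nonneg hp (fun ω => Y ω = t ∧ X ω = x ∧ Z ω = z)
        linarith
      rw [hnum, hx0]
      simp
  · -- conditional independence → H₀
    intro hCI x x' z hx hx' t
    have hz : 0 < Pr p (fun ω => Z ω = z) :=
      lt_of_lt_of_le hx (Pr_mono hp (fun ω h => h.2))
    have key : ∀ x₀ : 𝒳, 0 < Pr p (fun ω => X ω = x₀ ∧ Z ω = z) →
        Pr p (fun ω => Y0 x₀ z ω = t)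
          = Pr p (fun ω => Y ω = t ∧ Z ω = z) / Pr p (fun ω => Z ω = z) := by
      intro x₀ hx₀
      have h := hCI t x₀ z hz
      rw [hPA x₀ z t] at h
      have hBP : Pr p (fun ω => X ω = x₀ ∧ Z ω = z) / Pr p (fun ω => Z ω = z) ≠ 0 :=
        (div_pos hx₀ hz).ne'
      apply mul_right_cancel₀ hBP
      rw [← mul_div_assoc]
      exact h
    rw [key x hx, key x' hx']
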